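/- Let k ≥ 1 and let Ψ be a Max-kSAT instance with m_j j-clauses for j = 1,…,k. Then val_Ψ ≥ bias(Ψ)/2 + Σ_{j=1}^k (j/2^j)·m_j. (Lemma 6.2, part 1.) -/

import Mathlib

/-- A `Max-kSAT` clause: a disjunction of between 1 and `k` literals on pairwise
distinct variables. A literal on variable `i` with polarity `b` (`b = true` for `xᵢ`,
`b = false` for `¬xᵢ`) evaluates to `σ i == b`. -/
structure KClause (n k : ℕ) where
  lits : List (Fin n × Bool)
  nodup : (lits.map Prod.fst).Nodup
  len_pos : 0 < lits.length
  len_le : lits.length ≤ k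

/-- A clause is satisfied iff at least one of its literals receives value 1. -/
def KClause.eval {n k : ℕ} (C : KClause n k) (σ : Fin n → Bool) : Bool :=
  C.lits.any (fun l => σ l.1 == l.2)

/-- The number of clauses of `Ψ` satisfied by `σ`, i.e. `val_Ψ(σ)`. -/
def satCount {n k : ℕ} (Ψ : List (KClause n k)) (σ : Fin n → Bool) : ℕ :=
  Ψ.countP (fun C => C.eval σ)

/-- `val_Ψ`: the maximum number of simultaneously satisfiable clauses. -/
def maxVal {n k : ℕ} (Ψ : List (KClause n k)) : ℕ :=
  Finset.univ.sup (fun σ : Fin n → Bool => satCount Ψ σ)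

/-- `m_r`: the number of `r`-clauses (clauses on exactly `r` variables). -/
def numLen {n k : ℕ} (Ψ : List (KClause n k)) (r : ℕ) : ℕ :=
  Ψ.countP (fun C => C.lits.length == r)

/-- The number of `r`-clauses containing the literal on variable `v` with
polarity `b` (so `pos_v^{(r)}` for `b = true` and `neg_v^{(r)}` for `b = false`). -/
def cntLit {n k : ℕ} (Ψ : List (KClause n k)) (v : Fin n) (b : Bool) (r : ℕ) : ℕ :=
  Ψ.countP (fun C => decide (C.lits.length = r ∧ (v, b) ∈ C.lits))

/-- `bias(Ψ) = Σᵢ |Σ_{r=1}^k 2^{−(r−1)}·(posᵢ^{(r)} − negᵢ^{(r)})|`. -/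
noncomputable def bias {n k : ℕ} (Ψ : List (KClause n k)) : ℝ :=
  ∑ v : Fin n,
    |∑ r ∈ Finset.Icc 1 k,
      ((cntLit Ψ v true r : ℝ) - (cntLit Ψ v false r : ℝ)) / 2 ^ (r - 1)|

lemma two_mul_le_two_pow' (m : ℕ) (hm : 1 ≤ m) : 2 * m ≤ 2 ^ m := by
  induction m with
  | zero => omega
  | succ j ih =>
    rcases Nat.eq_or_lt_of_le hm with h | h
    · simp [← h]
    · have h1 := ih (by omega)
      have h2 : 2 ^ 1 ≤ 2 ^ j := Nat.pow_le_pow_right (by norm_num) (by omega)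
      rw [pow_succ]
      simp at h2
      linarith

lemma sum_indicator' {n : ℕ} (σ : Fin n → Bool) (L : List (Fin n × Bool))
    (hL : (L.map Prod.fst).Nodup) :
    ∑ v : Fin n, (if σ v then (1:ℝ) else -1) *
      ((if (v, true) ∈ L then (1:ℝ) else 0) - (if (v, false) ∈ L then (1:ℝ) else 0))
    = 2 * (L.countP (fun l => σ l.1 == l.2) : ℝ) - L.length := by
  induction L with
  | nil => simp
  | cons p L ih =>
    obtain ⟨w, b⟩ := p
    rw [List.map_cons, List.nodup_cons] at hL
    have hw : ∀ c, (w, c) ∉ L := by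
      intro c hc
      exact hL.1 ((List.mem_map_of_mem (f := Prod.fst) hc : w ∈ L.map Prod.fst))
    have step : ∀ v : Fin n,
        (if σ v then (1:ℝ) else -1) *
          ((if (v, true) ∈ (w, b) :: L then (1:ℝ) else 0)
            - (if (v, false) ∈ (w, b) :: L then (1:ℝ) else 0))
        = (if σ v then (1:ℝ) else -1) *
          ((if (v, true) ∈ L then (1:ℝ) else 0) - (if (v, false) ∈ L then (1:ℝ) else 0))
          + (if v = w then (if σ w = b then (1:ℝ) else -1) else 0) := by
      intro v
      by_cases hv : v = w
      · subst hv
        have h1 : ((v, true) ∈ (v, b) :: L) ↔ (b = true) := by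
          simp [List.mem_cons, hw, eq_comm]
        have h2 : ((v, false) ∈ (v, b) :: L) ↔ (b = false) := by
          simp [List.mem_cons, hw, eq_comm]
        have h3 : (v, true) ∉ L := hw true
        have h4 : (v, false) ∉ L := hw false
        cases b <;> cases hσ : σ v <;> simp [h1, h2, h3, h4, hσ]
      · have h1 : ((v, true) ∈ (w, b) :: L) ↔ (v, true) ∈ L := by
          simp [List.mem_cons, Prod.mk.injEq, hv]
        have h2 : ((v, false) ∈ (w, b) :: L) ↔ (v, false) ∈ L := by
          simp [List.mem_cons, Prod.mk.injEq, hv]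
        simp [h1, h2, hv]
    rw [Finset.sum_congr rfl (fun v _ => step v), Finset.sum_add_distrib, ih hL.2]
    rw [Finset.sum_ite_eq' Finset.univ w (fun _ => if σ w = b then (1:ℝ) else -1)]
    simp only [Finset.mem_univ, if_true, List.countP_cons, List.length_cons]
    by_cases h : σ w = b <;> simp [h] <;> push_cast <;> ring

lemma per_clause' {n k : ℕ} (σ : Fin n → Bool) (C : KClause n k) :
    (∑ v : Fin n, (if σ v then (1:ℝ) else -1) *
       ∑ r ∈ Finset.Icc 1 k,
         (((if C.lits.length = r ∧ (v, true) ∈ C.lits then (1:ℝ) else 0)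
          - (if C.lits.length = r ∧ (v, false) ∈ C.lits then (1:ℝ) else 0)) / 2 ^ (r - 1))) / 2
    + ∑ j ∈ Finset.Icc 1 k, ((j : ℝ) / 2 ^ j) * (if C.lits.length = j then (1:ℝ) else 0)
    ≤ (if C.eval σ then (1:ℝ) else 0) := by
  set L := C.lits with hLdef
  set m := L.length with hm
  have hm1 : 1 ≤ m := C.len_pos
  have hmk : m ≤ k := C.len_le
  have hmem : m ∈ Finset.Icc 1 k := Finset.mem_Icc.mpr ⟨hm1, hmk⟩
  have hcol : ∀ v : Fin n,
      ∑ r ∈ Finset.Icc 1 k,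
         (((if m = r ∧ (v, true) ∈ L then (1:ℝ) else 0)
          - (if m = r ∧ (v, false) ∈ L then (1:ℝ) else 0)) / 2 ^ (r - 1))
      = ((if (v, true) ∈ L then (1:ℝ) else 0) - (if (v, false) ∈ L then (1:ℝ) else 0))
          / 2 ^ (m - 1) := by
    intro v
    rw [Finset.sum_eq_single_of_mem m hmem]
    · simp
    · intro r _ hr
      simp [Ne.symm hr]
  have hcol2 : ∑ j ∈ Finset.Icc 1 k, ((j : ℝ) / 2 ^ j) * (if m = j then (1:ℝ) else 0)
      = (m : ℝ) / 2 ^ m := by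
    rw [Finset.sum_eq_single_of_mem m hmem]
    · simp
    · intro r _ hr
      simp [Ne.symm hr]
  rw [hcol2, Finset.sum_congr rfl (fun v _ => by rw [hcol v])]
  simp only [mul_div_assoc']
  rw [← Finset.sum_div, sum_indicator' σ L C.nodup, ← hm]
  set a := L.countP (fun l => σ l.1 == l.2) with ha
  have hpow : (2:ℝ) ^ m = 2 ^ (m - 1) * 2 := by
    rw [← pow_succ, Nat.sub_add_cancel hm1]
  have hpos : (0:ℝ) < 2 ^ m := by positivity
  have hkey : (2 * (a:ℝ) - m) / 2 ^ (m - 1) / 2 + (m:ℝ) / 2 ^ m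
      = 2 * (a:ℝ) / 2 ^ m := by
    rw [div_div, ← hpow]
    field_simp
    ring
  rw [hkey]
  by_cases hev : C.eval σ
  · have haL : a ≤ m := List.countP_le_length
    have h2 : 2 * a ≤ 2 ^ m := le_trans (by omega) (two_mul_le_two_pow' m hm1)
    rw [if_pos hev, div_le_one hpos]
    exact_mod_cast h2
  · have ha0 : a = 0 := by
      rw [ha, List.countP_eq_zero]
      intro l hl
      by_contra hc
      exact hev (List.any_eq_true.mpr ⟨l, hl, by simpa using hc⟩)
    rw [if_neg hev, ha0]
    simp

lemma combined' {n k : ℕ} (σ : Fin n → Bool) (Φ : List (KClause n k)) :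
    (∑ v : Fin n, (if σ v then (1:ℝ) else -1) *
       ∑ r ∈ Finset.Icc 1 k,
         ((cntLit Φ v true r : ℝ) - (cntLit Φ v false r : ℝ)) / 2 ^ (r - 1)) / 2
    + ∑ j ∈ Finset.Icc 1 k, ((j : ℝ) / 2 ^ j) * (numLen Φ j : ℝ)
    ≤ (satCount Φ σ : ℝ) := by
  induction Φ with
  | nil => simp [cntLit, numLen, satCount]
  | cons C Φ ih =>
    have hC := per_clause' σ C
    simp only [cntLit, numLen, satCount, List.countP_cons, decide_eq_true_eq,
      beq_iff_eq] at ih hC ⊢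
    push_cast
    simp only [add_sub_add_comm, add_div, Finset.sum_add_distrib, mul_add, add_mul]
    linarith

/-- Lemma 6.2, part 1: `val_Ψ ≥ bias(Ψ)/2 + Σ_{j=1}^k (j/2^j)·m_j`. -/
theorem ksat_bias_lower_bound_one {n k : ℕ} (hk : 1 ≤ k) (Ψ : List (KClause n k)) :
    bias Ψ / 2 + ∑ j ∈ Finset.Icc 1 k, ((j : ℝ) / 2 ^ j) * (numLen Ψ j : ℝ)
      ≤ (maxVal Ψ : ℝ) := by
  classical
  set δ : Fin n → ℝ := fun v =>
    ∑ r ∈ Finset.Icc 1 k,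
      ((cntLit Ψ v true r : ℝ) - (cntLit Ψ v false r : ℝ)) / 2 ^ (r - 1) with hδ
  set σ : Fin n → Bool := fun v => decide (0 ≤ δ v) with hσ
  have hbias : bias Ψ = ∑ v : Fin n, (if σ v then (1:ℝ) else -1) * δ v := by
    unfold bias
    refine Finset.sum_congr rfl fun v _ => ?_
    show |δ v| = (if σ v then (1:ℝ) else -1) * δ v
    have hσv : σ v = decide (0 ≤ δ v) := rfl
    by_cases h : 0 ≤ δ v
    · simp [hσv, h, abs_of_nonneg h]
    · rw [hσv, abs_of_neg (lt_of_not_ge h)]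
      simp [h]
  have hmain := combined' σ Ψ
  rw [hbias]
  have hval : satCount Ψ σ ≤ maxVal Ψ := Finset.le_sup (Finset.mem_univ σ)
  calc (∑ v : Fin n, (if σ v then (1:ℝ) else -1) * δ v) / 2
        + ∑ j ∈ Finset.Icc 1 k, ((j : ℝ) / 2 ^ j) * (numLen Ψ j : ℝ)
      ≤ (satCount Ψ σ : ℝ) := hmain
    _ ≤ (maxVal Ψ : ℝ) := by exact_mod_cast hval
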